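/- Let $X$ be a Banach space with separable dual $X^*$ and let $K \subseteq X^*$ be weak*-compact and nonempty. Then $K$ has a point of weak*-to-norm continuity, i.e., there exists $x^* \in K$ such that every sequence in $K$ converging to $x^*$ in the weak* topology converges to $x^*$ in norm. -/

import Mathlib

open Filter NormedSpace Set

/-- Let `X` be a Banach space with separable dual and `K ⊆ X*` nonempty and weak*-compact.
Then `K` has a point of weak*-to-norm continuity: some `φ ∈ K` such that every sequence in
`K` converging to `φ` in the weak* topology converges to `φ` in norm. -/
theorem exists_point_of_weakStar_to_norm_continuity
    (X : Type*) [NormedAddCommGroup X] [NormedSpace ℝ X] [CompleteSpace X]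
    [TopologicalSpace.SeparableSpace (StrongDual ℝ X)]
    (K : Set (StrongDual ℝ X)) (hKne : K.Nonempty)
    (hK : IsCompact (StrongDual.toWeakDual '' K)) :
    ∃ φ ∈ K, ∀ ψ : ℕ → StrongDual ℝ X, (∀ n, ψ n ∈ K) →
      (∀ v : X, Tendsto (fun n => ψ n v) atTop (nhds (φ v))) →
      Tendsto (fun n => ‖ψ n - φ‖) atTop (nhds 0) := by
  classical
  set W : Set (WeakDual ℝ X) := StrongDual.toWeakDual '' K with hW
  haveI : CompactSpace W := isCompact_iff_compactSpace.mp hK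
  -- countable dense set in the (norm) dual
  set u : ℕ → StrongDual ℝ X := TopologicalSpace.denseSeq (StrongDual ℝ X) with hu_def
  have hu : DenseRange u := TopologicalSpace.denseRange_denseSeq (StrongDual ℝ X)
  -- the closed pieces
  set F : ℕ → ℕ → Set W := fun n m =>
    Subtype.val ⁻¹' (WeakDual.toStrongDual ⁻¹' Metric.closedBall (u m) (1 / (n + 1))) with hF
  have hFclosed : ∀ n m, IsClosed (F n m) := fun n m =>
    (WeakDual.isClosed_closedBall (u m) (1 / (n + 1))).preimage continuous_subtype_val
  have hFcover : ∀ n, ⋃ m, F n m = univ := by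
    intro n
    ext φ
    simp only [mem_iUnion, mem_univ, iff_true]
    obtain ⟨m, hm⟩ := hu.exists_dist_lt (WeakDual.toStrongDual φ.val)
      (show (0:ℝ) < 1 / (n + 1) by positivity)
    exact ⟨m, by simpa [F, Metric.mem_closedBall, dist_comm] using hm.le⟩
  have hGdense : ∀ n, Dense (⋃ m, interior (F n m)) := fun n =>
    dense_iUnion_interior_of_closed (hFclosed n) (hFcover n)
  have hGopen : ∀ n, IsOpen (⋃ m, interior (F n m)) := fun n =>
    isOpen_iUnion fun m => isOpen_interior
  have hdense : Dense (⋂ n, ⋃ m, interior (F n m)) :=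
    dense_iInter_of_isOpen hGopen hGdense
  haveI : Nonempty W := by
    obtain ⟨φ, hφ⟩ := hKne
    exact ⟨⟨StrongDual.toWeakDual φ, mem_image_of_mem _ hφ⟩⟩
  obtain ⟨x0, hx0⟩ := hdense.nonempty
  -- the chosen point
  obtain ⟨φ, hφK, hφeq⟩ := x0.2
  refine ⟨φ, hφK, ?_⟩
  intro ψ hψK hψtend
  rw [NormedAddCommGroup.tendsto_nhds_zero]
  intro ε hε
  -- choose n with 2/(n+1) < ε
  obtain ⟨n, hn⟩ := exists_nat_gt (2 / ε)
  have hn' : 2 / ((n : ℝ) + 1) < ε := by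
    rw [div_lt_iff₀ (by positivity)]
    have h2 : 2 < (n:ℝ) * ε := (div_lt_iff₀ hε).mp hn
    nlinarith
  -- x0 is in some interior (F n m)
  have hx0n : x0 ∈ ⋃ m, interior (F n m) := by
    have := mem_iInter.mp hx0 n
    exact this
  obtain ⟨m, hm⟩ := mem_iUnion.mp hx0n
  -- the sequence in W
  have hσmem : ∀ k, StrongDual.toWeakDual (ψ k) ∈ W := fun k => mem_image_of_mem _ (hψK k)
  set σ : ℕ → W := fun k => ⟨StrongDual.toWeakDual (ψ k), hσmem k⟩ with hσ
  have hσtend : Tendsto σ atTop (nhds x0) := by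
    rw [tendsto_subtype_rng]
    rw [tendsto_iff_forall_eval_tendsto_topDualPairing]
    intro y
    have h1 : ∀ i, ((topDualPairing ℝ X) (σ i : WeakDual ℝ X)) y = ψ i y := fun i => rfl
    have h2 : ((topDualPairing ℝ X) (x0 : WeakDual ℝ X)) y = φ y := by rw [← hφeq]; rfl
    simp only [h1, h2]
    exact hψtend y
  have hev : ∀ᶠ k in atTop, σ k ∈ interior (F n m) :=
    hσtend.eventually (isOpen_interior.mem_nhds hm)
  have hφF : x0 ∈ F n m := interior_subset hm
  have hφball : ‖φ - u m‖ ≤ 1 / (n + 1) := by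
    have := hφF
    simp only [F, mem_preimage, Metric.mem_closedBall] at this
    rw [← hφeq] at this
    simpa [dist_eq_norm] using this
  filter_upwards [hev] with k hk
  have hkF : σ k ∈ F n m := interior_subset hk
  have hkball : ‖ψ k - u m‖ ≤ 1 / (n + 1) := by
    simp only [F, mem_preimage, Metric.mem_closedBall] at hkF
    rw [dist_eq_norm] at hkF
    exact (hkF : ‖ψ k - u m‖ ≤ 1 / (n + 1))
  have : ‖ψ k - φ‖ ≤ 2 / ((n : ℝ) + 1) := by
    calc ‖ψ k - φ‖ = ‖(ψ k - u m) - (φ - u m)‖ := by abel_nf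
    _ ≤ ‖ψ k - u m‖ + ‖φ - u m‖ := norm_sub_le _ _
    _ ≤ 1 / (n + 1) + 1 / (n + 1) := add_le_add hkball hφball
    _ = 2 / ((n : ℝ) + 1) := by ring
  calc ‖‖ψ k - φ‖‖ = ‖ψ k - φ‖ := norm_norm _
  _ ≤ 2 / ((n : ℝ) + 1) := this
  _ < ε := hn'
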